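/- If v satisfies Ultra and A ⊆ Ω is nonempty with x ∈ Ω \ A, then there is y ∈ A such that v({x}) + v(A) ≤ v({y}) + v((A \ {y}) ∪ {x}). -/

import Mathlib

def comp {α : Type*} [DecidableEq α] (v : Finset α → ℝ) (A : Finset α) (x y : α) : ℝ :=
  v (insert x (insert y A)) - v (insert x A) - v (insert y A) + v A

def UltraProp {α : Type*} [DecidableEq α] (v : Finset α → ℝ) : Prop :=
  ∀ A : Finset α, ∀ x y z : α, x ∉ A → y ∉ A → z ∉ A →
    x ≠ y → x ≠ z → y ≠ z →
    comp v A x y > comp v A x z → comp v A y z = comp v A x y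

lemma comp_comm {α : Type*} [DecidableEq α] (v : Finset α → ℝ) (C : Finset α) (a b : α) :
    comp v C a b = comp v C b a := by
  unfold comp
  rw [Finset.insert_comm]
  ring

lemma ultra_aux {α : Type*} [DecidableEq α] (v : Finset α → ℝ) (hv : UltraProp v) (x : α) :
    ∀ n (R C : Finset α), R.card = n → R.Nonempty → x ∉ C → x ∉ R → (∀ r ∈ R, r ∉ C) →
    ∃ y ∈ R, v (insert x C) - v (insert y C)
      ≤ v (insert x (C ∪ R.erase y)) - v (C ∪ R) := by
  intro n
  induction n using Nat.strong_induction_on with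
  | _ n IH =>
    intro R C hcard hR hxC hxR hRC
    -- pick b maximizing comp v C x · over R
    obtain ⟨b, hbR, hbmax⟩ := Finset.exists_max_image R (fun z => comp v C x z) hR
    -- key: for z ∈ R, z ≠ b, comp v C z b ≤ comp v C x b
    have key : ∀ z ∈ R, z ≠ b → comp v C z b ≤ comp v C x b := by
      intro z hzR hzb
      by_contra hlt
      push_neg at hlt
      have hbC : b ∉ C := hRC b hbR
      have hzC : z ∉ C := hRC z hzR
      have hbx : b ≠ x := fun h => hxR (h ▸ hbR)
      have hzx : z ≠ x := fun h => hxR (h ▸ hzR)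
      have h1 : comp v C b z > comp v C b x := by
        rw [comp_comm v C b z, comp_comm v C b x]
        exact hlt
      have h2 := hv C b z x hbC hzC hxC (Ne.symm hzb) hbx hzx h1
      -- comp v C z x = comp v C b z > comp v C b x = comp v C x b
      have h3 : comp v C x z > comp v C x b := by
        rw [comp_comm v C x z, h2, comp_comm v C x b]
        exact h1
      exact absurd (hbmax z hzR) (not_le.mpr h3)
    by_cases hsing : R.erase b = ∅
    · -- R = {b}
      refine ⟨b, hbR, ?_⟩
      have hReq : R = {b} := by
        ext a
        constructor
        · intro ha
          by_contra hab
          have : a ∈ R.erase b := Finset.mem_erase.mpr ⟨by simpa using hab, ha⟩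
          simp [hsing] at this
        · intro ha
          simp at ha
          exact ha ▸ hbR
      rw [hReq]
      have : C ∪ {b} = insert b C := by ext a; simp [or_comm]
      simp [this]
    · have hR' : (R.erase b).Nonempty := Finset.nonempty_iff_ne_empty.mpr hsing
      have hbC : b ∉ C := hRC b hbR
      have hbx : b ≠ x := fun h => hxR (h ▸ hbR)
      have hcard' : (R.erase b).card = n - 1 := by
        rw [Finset.card_erase_of_mem hbR, hcard]
      have hn : n - 1 < n := by
        have : 0 < n := hcard ▸ Finset.card_pos.mpr hR
        omega
      obtain ⟨y, hyR', hy⟩ := IH (n - 1) hn (R.erase b) (insert b C) hcard' hR'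
        (by simp [hxC, Ne.symm hbx])
        (fun h => hxR (Finset.mem_of_mem_erase h))
        (by
          intro r hr
          have hrb := (Finset.mem_erase.mp hr).1
          have hrR := (Finset.mem_erase.mp hr).2
          simp [hrb, hRC r hrR])
      have hyb : y ≠ b := (Finset.mem_erase.mp hyR').1
      have hyR : y ∈ R := (Finset.mem_erase.mp hyR').2
      refine ⟨y, hyR, ?_⟩
      -- set equalities
      have hset1 : insert b C ∪ (R.erase b) = C ∪ R := by
        ext a
        simp only [Finset.mem_union, Finset.mem_insert, Finset.mem_erase]
        constructor
        · rintro (⟨rfl | h⟩ | ⟨_, h⟩) <;> tauto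
        · rintro (h | h)
          · tauto
          · by_cases hab : a = b <;> tauto
      have hset2 : insert b C ∪ ((R.erase b).erase y) = C ∪ R.erase y := by
        ext a
        simp only [Finset.mem_union, Finset.mem_insert, Finset.mem_erase]
        constructor
        · rintro (⟨rfl | h⟩ | ⟨_, _, h⟩)
          · exact Or.inr ⟨Ne.symm hyb, hbR⟩
          · tauto
          · tauto
        · rintro (h | ⟨hay, haR⟩)
          · tauto
          · by_cases hab : a = b <;> tauto
      rw [hset1, hset2] at hy
      -- chain: goalLHS ≤ ihLHS using comp v C y b ≤ comp v C x b
      have hcyb : comp v C y b ≤ comp v C x b := key y hyR hyb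
      have e1 : insert x (insert b C) = insert b (insert x C) := Finset.insert_comm x b C
      have e2 : insert y (insert b C) = insert b (insert y C) := Finset.insert_comm y b C
      unfold comp at hcyb
      have hy' : v (insert x (insert b C)) - v (insert y (insert b C))
          ≤ v (insert x (C ∪ R.erase y)) - v (C ∪ R) := hy
      linarith [hy']

theorem ultra_one_exchange {α : Type*} [DecidableEq α]
    (v : Finset α → ℝ) (hv : UltraProp v)
    (A : Finset α) (hA : A.Nonempty) (x : α) (hx : x ∉ A) :
    ∃ y ∈ A, v {x} + v A ≤ v {y} + v (insert x (A.erase y)) := by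
  obtain ⟨y, hyA, hy⟩ := ultra_aux v hv x A.card A ∅ rfl hA (by simp) hx (by simp)
  refine ⟨y, hyA, ?_⟩
  simp only [Finset.empty_union, LawfulSingleton.insert_empty_eq] at hy
  linarith
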